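/- arXiv:2509.14588 — 2 statements merged into one kernel-verified Lean document; each statement's English description precedes it below -/
import Mathlib

section
/- Let (x1, y1) and (x2, y2) be pairs of vertices of G such that every pair of paths (P1, P2) ∈ Π(x1, y1) × Π(x2, y2) shares an internal vertex. Then for every integer k ≥ 1, the following polynomial identity holds: F_{disj,k}(x1, y1, x2, y2) = Σ_{v, w ∈ V} D_{v,w,k}(x1, y1, x2, y2). -/
open scoped BigOperators

namespace DSP

variable {V : Type*} [Fintype V] [DecidableEq V]

/-- A path: a nonempty list of distinct vertices in which each consecutive
pair is joined by a directed edge. -/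
def IsPath (E : V → V → Prop) (p : List V) : Prop :=
  p ≠ [] ∧ p.Nodup ∧ p.Chain' E

/-- A path from `x` to `y`. -/
def IsPathFrom (E : V → V → Prop) (p : List V) (x y : V) : Prop :=
  IsPath E p ∧ p.head? = some x ∧ p.getLast? = some y

/-- The (ordered) list of edges of a path. -/
def pathEdges (p : List V) : List (V × V) := p.zip p.tail

/-- The weight of a path: the sum of its edge weights. -/
def pathWeight (ℓ : V → V → ℝ) (p : List V) : ℝ :=
  ((pathEdges p).map fun e => ℓ e.1 e.2).sum

/-- `dist x y` : the minimum weight of a path from `x` to `y`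
(`⊤` if there is no such path). -/
noncomputable def dist (E : V → V → Prop) (ℓ : V → V → ℝ) (x y : V) : EReal :=
  sInf {w : EReal | ∃ p : List V, IsPathFrom E p x y ∧ (pathWeight ℓ p : EReal) = w}

/-- A shortest path from `x` to `y` : a path from `x` to `y` whose weight
equals `dist x y`.  `Π(x, y)` is the set of all such paths. -/
def IsShortestPath (E : V → V → Prop) (ℓ : V → V → ℝ) (p : List V) (x y : V) : Prop :=
  IsPathFrom E p x y ∧ (pathWeight ℓ p : EReal) = dist E ℓ x y

/-- A directed cycle: a closed walk with at least one edge whose internal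
vertices are pairwise distinct. -/
def IsCycle (E : V → V → Prop) (p : List V) : Prop :=
  2 ≤ p.length ∧ p.Chain' E ∧ p.head? = p.getLast? ∧ p.tail.Nodup

/-- `G` contains no directed cycle of negative or zero total weight. -/
def NoNonposCycle (E : V → V → Prop) (ℓ : V → V → ℝ) : Prop :=
  ∀ p : List V, IsCycle E p → 0 < pathWeight ℓ p

/-- `G` is a DAG: it contains no directed cycle. -/
def Acyclic (E : V → V → Prop) : Prop :=
  ∀ p : List V, ¬ IsCycle E p

/-- `x` precedes `y` on the path `p` (`x = y` allowed). -/
def Precedes (p : List V) (x y : V) : Prop :=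
  x ∈ p ∧ y ∈ p ∧ p.idxOf x ≤ p.idxOf y

/-- `subpath p x y` : the subpath `p[x, y]` of `p` from `x` to `y`
(for `x` preceding `y` on `p`). -/
def subpath (p : List V) (x y : V) : List V :=
  (p.take (p.idxOf y + 1)).drop (p.idxOf x)

/-- Concatenation `p · q` of two paths (the last vertex of `p` coinciding
with the first vertex of `q`). -/
def pathConcat (p q : List V) : List V := p ++ q.tail

/-- A vertex is internal to a path if it lies on it and is not an endpoint. -/
def Internal (p : List V) (v : V) : Prop :=
  v ∈ p ∧ p.head? ≠ some v ∧ p.getLast? ≠ some v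

/-- Paths `p1` from `x1` to `y1` and `p2` from `x2` to `y2` are internally
vertex-disjoint: they share no vertices except possibly those in
`{x1, y1} ∩ {x2, y2}`. -/
def InternallyDisjoint (p1 : List V) (x1 y1 : V) (p2 : List V) (x2 y2 : V) : Prop :=
  ∀ u, u ∈ p1 → u ∈ p2 → u ∈ ({x1, y1} ∩ {x2, y2} : Set V)

/-- `(a, b)` is a twin-crossing pair for paths `p1`, `p2`. -/
def TwinCrossingPair (p1 p2 : List V) (a b : V) : Prop :=
  a ≠ b ∧ Precedes p1 a b ∧ Precedes p2 a b ∧ subpath p1 a b ≠ subpath p2 a b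

/-- The swap operation `φ_{a,b}(P1, P2)`. -/
def swap (p1 : List V) (x1 y1 : V) (p2 : List V) (x2 y2 : V) (a b : V) :
    List V × List V :=
  (pathConcat (pathConcat (subpath p1 x1 a) (subpath p2 a b)) (subpath p1 b y1),
   pathConcat (pathConcat (subpath p2 x2 a) (subpath p1 a b)) (subpath p2 b y2))

/-- The graph with vertex `u` deleted. -/
def deleteVertex (E : V → V → Prop) (u : V) : V → V → Prop :=
  fun a b => E a b ∧ a ≠ u ∧ b ≠ u

/-- `u` is distance-critical for `(x, y)` : deleting `u` strictly increases
the distance from `x` to `y`. -/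
def DistCritical (E : V → V → Prop) (ℓ : V → V → ℝ) (x y u : V) : Prop :=
  dist E ℓ x y < dist (deleteVertex E u) ℓ x y

/-- `Δ(x, y)` : the distance-critical vertices for `(x, y)` together with the
endpoints `x`, `y`. -/
def Delta (E : V → V → Prop) (ℓ : V → V → ℝ) (x y : V) : Set V :=
  {u | DistCritical E ℓ x y u} ∪ {x, y}

/-- `δ(x, y) = |Δ(x, y)|`. -/
noncomputable def deltaCard (E : V → V → Prop) (ℓ : V → V → ℝ) (x y : V) : ℕ :=
  (Delta E ℓ x y).ncard

/-- `(a, b)` is a concordant pair for paths `p1` (from `x1` to `y1`) and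
`p2` (from `x2` to `y2`). -/
def ConcordantPair (p1 : List V) (x1 y1 : V) (p2 : List V) (x2 y2 : V) (a b : V) : Prop :=
  a ∉ ({x1, y1} ∩ {x2, y2} : Set V) ∧ b ∉ ({x1, y1} ∩ {x2, y2} : Set V) ∧
  Precedes p1 a b ∧ Precedes p2 a b ∧
  InternallyDisjoint (subpath p1 x1 a) x1 a (subpath p2 x2 a) x2 a ∧
  InternallyDisjoint (subpath p1 b y1) b y1 (subpath p2 b y2) b y2

/-- `𝒞(P1, P2)` : the set of concordant pairs for `(P1, P2)`. -/
def concordantSet (p1 : List V) (x1 y1 : V) (p2 : List V) (x2 y2 : V) : Set (V × V) :=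
  {c | ConcordantPair p1 x1 y1 p2 x2 y2 c.1 c.2}

/-- The interaction complexity `γ(P1, P2) = Σ_{(v,w) ∈ 𝒞(P1,P2)} δ(v, w)`. -/
noncomputable def gamma (E : V → V → Prop) (ℓ : V → V → ℝ)
    (p1 : List V) (x1 y1 : V) (p2 : List V) (x2 y2 : V) : ℕ :=
  ∑ᶠ c ∈ concordantSet p1 x1 y1 p2 x2 y2, deltaCard E ℓ c.1 c.2

/-- `E(x, y)` : the set of edges lying on at least one shortest path
from `x` to `y`. -/
def shortestEdges (E : V → V → Prop) (ℓ : V → V → ℝ) (x y : V) : Set (V × V) :=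
  {e | ∃ p : List V, IsShortestPath E ℓ p x y ∧ e ∈ pathEdges p}

section Poly

variable (F : Type*) [Field F] [CharP F 2]

/-- The monomial `f(P) = ∏_{e ∈ E(P)} z_e` of a path. -/
noncomputable def pathMon (p : List V) : MvPolynomial (V × V) F :=
  ((pathEdges p).map fun e => MvPolynomial.X e).prod

/-- The enumerating polynomial of a collection of paths. -/
noncomputable def enumPoly (S : Set (List V)) : MvPolynomial (V × V) F :=
  ∑ᶠ p ∈ S, pathMon F p

/-- The enumerating polynomial of a collection of pairs of paths. -/
noncomputable def enumPoly2 (S : Set (List V × List V)) : MvPolynomial (V × V) F :=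
  ∑ᶠ q ∈ S, pathMon F q.1 * pathMon F q.2

variable (E : V → V → Prop) (ℓ : V → V → ℝ)

/-- `F(x, y)` : the enumerating polynomial of `Π(x, y)`. -/
noncomputable def Fpoly (x y : V) : MvPolynomial (V × V) F :=
  enumPoly F {p : List V | IsShortestPath E ℓ p x y}

end Poly

variable (E : V → V → Prop) (ℓ : V → V → ℝ)

/-- The collection of internally vertex-disjoint pairs
`(P1, P2) ∈ Π(x1, y1) × Π(x2, y2)`. -/
def disjPairs (x1 y1 x2 y2 : V) : Set (List V × List V) :=
  {q | IsShortestPath E ℓ q.1 x1 y1 ∧ IsShortestPath E ℓ q.2 x2 y2 ∧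
       InternallyDisjoint q.1 x1 y1 q.2 x2 y2}

/-- Pairs `(P1, P2) ∈ Π(x1, y1) × Π(x2, y2)` such that `v ∈ V(P1) ∩ V(P2)`
and the prefix `P1[x1, v]` and the suffix `P2[v, y2]` are internally
vertex-disjoint (defining `H_v`). -/
def HvPairs (v x1 y1 x2 y2 : V) : Set (List V × List V) :=
  {q | IsShortestPath E ℓ q.1 x1 y1 ∧ IsShortestPath E ℓ q.2 x2 y2 ∧
       v ∈ q.1 ∧ v ∈ q.2 ∧
       InternallyDisjoint (subpath q.1 x1 v) x1 v (subpath q.2 v y2) v y2}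

/-- Pairs `(P1, P2) ∈ Π(x1, y1) × Π(x2, y2)` such that
`(a, v) ∈ E(P1) ∩ E(P2)` and the prefix `P1[x1, a]` and the suffix
`P2[v, y2]` are internally vertex-disjoint (defining `H_{av}`). -/
def HavPairs (a v x1 y1 x2 y2 : V) : Set (List V × List V) :=
  {q | IsShortestPath E ℓ q.1 x1 y1 ∧ IsShortestPath E ℓ q.2 x2 y2 ∧
       (a, v) ∈ pathEdges q.1 ∧ (a, v) ∈ pathEdges q.2 ∧
       InternallyDisjoint (subpath q.1 x1 a) x1 a (subpath q.2 v y2) v y2}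

/-- Pairs `(P1, P2) ∈ Π(x1, y1) × Π(x2, y2)` such that `v ∈ V(P1) ∩ V(P2)`
and the prefix `P1[x1, v]` is internally vertex-disjoint from both
`P2[x2, v]` and `P2[v, y2]` (defining `D_v`). -/
def DvPairs (v x1 y1 x2 y2 : V) : Set (List V × List V) :=
  {q | IsShortestPath E ℓ q.1 x1 y1 ∧ IsShortestPath E ℓ q.2 x2 y2 ∧
       v ∈ q.1 ∧ v ∈ q.2 ∧
       InternallyDisjoint (subpath q.1 x1 v) x1 v (subpath q.2 x2 v) x2 v ∧
       InternallyDisjoint (subpath q.1 x1 v) x1 v (subpath q.2 v y2) v y2}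

/-- Pairs `(P1, P2) ∈ Π(x1, y1) × Π(x2, y2)` with interaction complexity
`γ(P1, P2) ≤ k` (defining `F_{disj,k}`). -/
def disjkPairs (k : ℤ) (x1 y1 x2 y2 : V) : Set (List V × List V) :=
  {q | IsShortestPath E ℓ q.1 x1 y1 ∧ IsShortestPath E ℓ q.2 x2 y2 ∧
       (gamma E ℓ q.1 x1 y1 q.2 x2 y2 : ℤ) ≤ k}

/-- Pairs `(P1, P2) ∈ Π(x1, y1) × Π(x2, y2)` with `γ(P1, P2) ≤ k` such that
`(v, w) ∈ 𝒞(P1, P2)` and `(v, w)` is the concordant pair appearing first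
along `P1` (defining `D_{v,w,k}`). -/
def DvwkPairs (k : ℤ) (v w x1 y1 x2 y2 : V) : Set (List V × List V) :=
  {q | IsShortestPath E ℓ q.1 x1 y1 ∧ IsShortestPath E ℓ q.2 x2 y2 ∧
       (gamma E ℓ q.1 x1 y1 q.2 x2 y2 : ℤ) ≤ k ∧
       (v, w) ∈ concordantSet q.1 x1 y1 q.2 x2 y2 ∧
       ∀ c ∈ concordantSet q.1 x1 y1 q.2 x2 y2, q.1.idxOf v ≤ q.1.idxOf c.1}

/-- Pairs `(P1, P2) ∈ Π(x1, y1) × Π(x2, y2)` such that `v` and `w` lie on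
both paths with `v` preceding `w` on both, the subpaths `P1[x1, v]` and
`P2[w, y2]` are internally vertex-disjoint, and
`γ(P1[v, y1], P2[x2, w]) ≤ k` (defining `H_{v,w,k}`). -/
def HvwkPairs (k : ℤ) (v w x1 y1 x2 y2 : V) : Set (List V × List V) :=
  {q | IsShortestPath E ℓ q.1 x1 y1 ∧ IsShortestPath E ℓ q.2 x2 y2 ∧
       Precedes q.1 v w ∧ Precedes q.2 v w ∧
       InternallyDisjoint (subpath q.1 x1 v) x1 v (subpath q.2 w y2) w y2 ∧
       (gamma E ℓ (subpath q.1 v y1) v y1 (subpath q.2 x2 w) x2 w : ℤ) ≤ k}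

/-- As `HvwkPairs`, additionally requiring the edge `(a, v)` on both paths
(disjointness imposed on `P1[x1, a]` and `P2[w, y2]`), defining `H_{av,w,k}`. -/
def HavwkPairs (k : ℤ) (a v w x1 y1 x2 y2 : V) : Set (List V × List V) :=
  {q | IsShortestPath E ℓ q.1 x1 y1 ∧ IsShortestPath E ℓ q.2 x2 y2 ∧
       Precedes q.1 v w ∧ Precedes q.2 v w ∧
       (a, v) ∈ pathEdges q.1 ∧ (a, v) ∈ pathEdges q.2 ∧
       InternallyDisjoint (subpath q.1 x1 a) x1 a (subpath q.2 w y2) w y2 ∧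
       (gamma E ℓ (subpath q.1 v y1) v y1 (subpath q.2 x2 w) x2 w : ℤ) ≤ k}

/-- As `HvwkPairs`, additionally requiring the edge `(w, b)` on both paths
(disjointness imposed on `P1[x1, v]` and `P2[b, y2]`), defining `H_{v,wb,k}`. -/
def HvwbkPairs (k : ℤ) (v w b x1 y1 x2 y2 : V) : Set (List V × List V) :=
  {q | IsShortestPath E ℓ q.1 x1 y1 ∧ IsShortestPath E ℓ q.2 x2 y2 ∧
       Precedes q.1 v w ∧ Precedes q.2 v w ∧
       (w, b) ∈ pathEdges q.1 ∧ (w, b) ∈ pathEdges q.2 ∧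
       InternallyDisjoint (subpath q.1 x1 v) x1 v (subpath q.2 b y2) b y2 ∧
       (gamma E ℓ (subpath q.1 v y1) v y1 (subpath q.2 x2 w) x2 w : ℤ) ≤ k}

/-- As `HvwkPairs`, additionally requiring both edges `(a, v)` and `(w, b)`
on both paths (disjointness imposed on `P1[x1, a]` and `P2[b, y2]`),
defining `H_{av,wb,k}`. -/
def HavwbkPairs (k : ℤ) (a v w b x1 y1 x2 y2 : V) : Set (List V × List V) :=
  {q | IsShortestPath E ℓ q.1 x1 y1 ∧ IsShortestPath E ℓ q.2 x2 y2 ∧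
       Precedes q.1 v w ∧ Precedes q.2 v w ∧
       (a, v) ∈ pathEdges q.1 ∧ (a, v) ∈ pathEdges q.2 ∧
       (w, b) ∈ pathEdges q.1 ∧ (w, b) ∈ pathEdges q.2 ∧
       InternallyDisjoint (subpath q.1 x1 a) x1 a (subpath q.2 b y2) b y2 ∧
       (gamma E ℓ (subpath q.1 v y1) v y1 (subpath q.2 x2 w) x2 w : ℤ) ≤ k}

section AuxLemmas
set_option linter.unusedSectionVars false

variable {E : V → V → Prop} {ℓ : V → V → ℝ}

/-! ### Basic list lemmas -/

lemma mem_of_head?' {p : List V} {x : V} (h : p.head? = some x) : x ∈ p := by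
  rw [List.eq_cons_of_mem_head? h]; exact List.mem_cons_self

lemma indexOf_head {p : List V} {x : V} (h : p.head? = some x) : p.idxOf x = 0 := by
  rw [List.eq_cons_of_mem_head? h]; exact List.idxOf_cons_self

lemma mem_of_getLast?' {p : List V} {y : V} (h : p.getLast? = some y) : y ∈ p := by
  have := List.dropLast_append_getLast? y h
  rw [← this]; simp

lemma ne_nil_of_head? {p : List V} {x : V} (h : p.head? = some x) : p ≠ [] := by
  rintro rfl; simp at h

lemma ne_nil_of_getLast? {p : List V} {y : V} (h : p.getLast? = some y) : p ≠ [] := by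
  rintro rfl; simp at h

lemma eq_of_indexOf_eq {p : List V} (hp : p.Nodup) {a b : V} (ha : a ∈ p) (hb : b ∈ p)
    (h : p.idxOf a = p.idxOf b) : a = b := by
  have h1 : p.idxOf a < p.length := List.idxOf_lt_length_iff.2 ha
  have h2 : p.idxOf b < p.length := List.idxOf_lt_length_iff.2 hb
  have ha' : p[p.idxOf a]? = some a := List.getElem?_idxOf ha
  have hb' : p[p.idxOf b]? = some b := List.getElem?_idxOf hb
  rw [h, hb'] at ha'
  exact (Option.some_inj.1 ha').symm

lemma indexOf_getLast {p : List V} (hp : p.Nodup) {y : V} (h : p.getLast? = some y) :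
    p.idxOf y = p.length - 1 := by
  have hne : p ≠ [] := ne_nil_of_getLast? h
  have hl : 0 < p.length := List.length_pos_iff.2 hne
  have h1 : p.length - 1 < p.length := by omega
  have hy : p[p.length - 1] = y := by
    have := List.getLast?_eq_getElem? (l := p)
    rw [h, List.getElem?_eq_getElem h1] at this
    exact (Option.some_inj.1 this.symm)
  rw [← hy]
  exact hp.idxOf_getElem _ h1

lemma indexOf_lt_of_mem_take {p : List V} {n : ℕ} {s : V} (h : s ∈ p.take n) :
    p.idxOf s < n := by
  have hmem : s ∈ p.take n := h
  have h1 : p.idxOf s = (p.take n).idxOf s := by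
    conv_lhs => rw [← List.take_append_drop n p]
    exact List.idxOf_append_of_mem hmem
  rw [h1]
  calc (p.take n).idxOf s < (p.take n).length := List.idxOf_lt_length_iff.2 hmem
    _ ≤ n := by rw [List.length_take]; exact min_le_left _ _

lemma mem_take_of_lt {p : List V} {n : ℕ} {s : V} (hs : s ∈ p) (h : p.idxOf s < n) :
    s ∈ p.take n := by
  have h1 : p.idxOf s < p.length := List.idxOf_lt_length_iff.2 hs
  have h2 : p.idxOf s < (p.take n).length := by simp; omega
  have h3 : (p.take n)[p.idxOf s]? = p[p.idxOf s]? := List.getElem?_take_of_lt h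
  rw [List.getElem?_idxOf hs] at h3
  exact List.mem_of_getElem? h3

lemma mem_drop_of_le {p : List V} {n : ℕ} {s : V} (hs : s ∈ p) (h : n ≤ p.idxOf s) :
    s ∈ p.drop n := by
  have h1 : p.idxOf s < p.length := List.idxOf_lt_length_iff.2 hs
  have h2 : (p.drop n)[p.idxOf s - n]? = p[n + (p.idxOf s - n)]? :=
    List.getElem?_drop
  have h3 : n + (p.idxOf s - n) = p.idxOf s := by omega
  rw [h3, List.getElem?_idxOf hs] at h2
  exact List.mem_of_getElem? h2

lemma le_indexOf_of_mem_drop {p : List V} (hp : p.Nodup) {n : ℕ} {s : V}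
    (h : s ∈ p.drop n) : n ≤ p.idxOf s := by
  by_contra hlt
  push_neg at hlt
  have hs : s ∈ p := List.mem_of_mem_drop h
  have h1 : s ∈ p.take n := mem_take_of_lt hs hlt
  have hnd : (p.take n ++ p.drop n).Nodup := by rw [List.take_append_drop]; exact hp
  exact (List.nodup_append.1 hnd).2.2 s h1 s h rfl

lemma getLast?_drop_of_lt {p : List V} {n : ℕ} (h : n < p.length) :
    (p.drop n).getLast? = p.getLast? := by
  have hne : p.drop n ≠ [] := by
    intro hc
    have := (List.length_drop : (p.drop n).length = p.length - n)
    rw [hc] at this; simp at this; omega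
  conv_rhs => rw [← List.take_append_drop n p]
  rw [List.getLast?_append]
  cases hgl : (p.drop n).getLast? with
  | none => exact absurd (List.getLast?_eq_none_iff.1 hgl) hne
  | some a => simp

end AuxLemmas
section AuxLemmas2
set_option linter.unusedSectionVars false

variable {E : V → V → Prop} {ℓ : V → V → ℝ}

/-! ### subpath lemmas -/

lemma subpath_infix (p : List V) (u t : V) : subpath p u t <:+: p := by
  refine ⟨(p.take (p.idxOf t + 1)).take (p.idxOf u), p.drop (p.idxOf t + 1), ?_⟩
  rw [subpath, List.take_append_drop, List.take_append_drop]

lemma mem_of_mem_subpath {p : List V} {u t s : V} (h : s ∈ subpath p u t) : s ∈ p :=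
  (subpath_infix p u t).subset h

lemma subpath_nodup {p : List V} (hp : p.Nodup) (u t : V) : (subpath p u t).Nodup :=
  hp.sublist (subpath_infix p u t).sublist

lemma subpath_chain' {p : List V} (hp : p.Chain' E) (u t : V) : (subpath p u t).Chain' E :=
  hp.infix (subpath_infix p u t)

lemma subpath_length {p : List V} {u t : V} (ht : t ∈ p) :
    (subpath p u t).length = p.idxOf t + 1 - p.idxOf u := by
  have h1 : p.idxOf t < p.length := List.idxOf_lt_length_iff.2 ht
  rw [subpath, List.length_drop, List.length_take]
  omega

lemma subpath_head? {p : List V} {u t : V} (hu : u ∈ p) (ht : t ∈ p)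
    (hle : p.idxOf u ≤ p.idxOf t) : (subpath p u t).head? = some u := by
  have h1 : p.idxOf u < p.length := List.idxOf_lt_length_iff.2 hu
  have h2 : p.idxOf t < p.length := List.idxOf_lt_length_iff.2 ht
  rw [subpath, List.head?_eq_getElem?, List.getElem?_drop,
    Nat.add_zero, List.getElem?_take_of_lt (by omega)]
  exact List.getElem?_idxOf hu

lemma subpath_getLast? {p : List V} {u t : V} (hu : u ∈ p) (ht : t ∈ p)
    (hle : p.idxOf u ≤ p.idxOf t) : (subpath p u t).getLast? = some t := by
  have h1 : p.idxOf u < p.length := List.idxOf_lt_length_iff.2 hu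
  have h2 : p.idxOf t < p.length := List.idxOf_lt_length_iff.2 ht
  have hlen : (p.take (p.idxOf t + 1)).length = p.idxOf t + 1 := by
    rw [List.length_take]; omega
  rw [subpath, getLast?_drop_of_lt (by omega), List.getLast?_eq_getElem?, hlen,
    Nat.add_sub_cancel, List.getElem?_take_of_lt (by omega)]
  exact List.getElem?_idxOf ht

lemma subpath_ne_nil {p : List V} {u t : V} (hu : u ∈ p) (ht : t ∈ p)
    (hle : p.idxOf u ≤ p.idxOf t) : subpath p u t ≠ [] :=
  ne_nil_of_head? (subpath_head? hu ht hle)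

lemma mem_subpath_of_le {p : List V} {u t s : V} (hs : s ∈ p)
    (h1 : p.idxOf u ≤ p.idxOf s) (h2 : p.idxOf s ≤ p.idxOf t) :
    s ∈ subpath p u t := by
  have hsl : p.idxOf s < p.length := List.idxOf_lt_length_iff.2 hs
  have hst : s ∈ p.take (p.idxOf t + 1) := mem_take_of_lt hs (by omega)
  rw [subpath]
  apply mem_drop_of_le hst
  rwa [← List.idxOf_append_of_mem hst (l₂ := p.drop (p.idxOf t + 1)),
    List.take_append_drop]

lemma of_mem_subpath {p : List V} (hp : p.Nodup) {u t s : V} (h : s ∈ subpath p u t) :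
    s ∈ p ∧ p.idxOf u ≤ p.idxOf s ∧ p.idxOf s ≤ p.idxOf t := by
  have hs : s ∈ p := mem_of_mem_subpath h
  have hst : s ∈ p.take (p.idxOf t + 1) := List.mem_of_mem_drop h
  have hub : p.idxOf s < p.idxOf t + 1 := indexOf_lt_of_mem_take hst
  have hnd : (p.take (p.idxOf t + 1)).Nodup := hp.sublist (List.take_sublist _ _)
  have hlb : p.idxOf u ≤ (p.take (p.idxOf t + 1)).idxOf s :=
    le_indexOf_of_mem_drop hnd h
  have : (p.take (p.idxOf t + 1)).idxOf s = p.idxOf s := by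
    rw [← List.idxOf_append_of_mem hst (l₂ := p.drop (p.idxOf t + 1)),
      List.take_append_drop]
  exact ⟨hs, by omega, by omega⟩

lemma subpath_eq_take {p : List V} {x t : V} (hx : p.head? = some x) :
    subpath p x t = p.take (p.idxOf t + 1) := by
  rw [subpath, indexOf_head hx, List.drop_zero]

lemma subpath_eq_drop {p : List V} (hp : p.Nodup) {u y : V} (hy : p.getLast? = some y) :
    subpath p u y = p.drop (p.idxOf u) := by
  have hne : p ≠ [] := ne_nil_of_getLast? hy
  have hl : 0 < p.length := List.length_pos_iff.2 hne
  rw [subpath, indexOf_getLast hp hy]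
  congr 1
  rw [show p.length - 1 + 1 = p.length by omega, List.take_length]

lemma subpath_whole {p : List V} (hp : p.Nodup) {x y : V} (hx : p.head? = some x)
    (hy : p.getLast? = some y) : subpath p x y = p := by
  rw [subpath_eq_drop hp hy, indexOf_head hx, List.drop_zero]

lemma take_drop_split {q : List V} {i m : ℕ} (h : i ≤ m) :
    q.drop i = (q.take m).drop i ++ q.drop m := by
  rcases le_or_gt i q.length with hle | hlt
  · rcases le_or_gt m q.length with hm | hm
    · conv_lhs => rw [← List.take_append_drop m q]
      rw [List.drop_append_of_le_length (by rw [List.length_take]; omega)]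
    · rw [List.take_of_length_le hm.le, List.drop_eq_nil_of_le hm.le, List.append_nil]
  · rw [List.drop_eq_nil_of_le hlt.le, List.take_of_length_le (by omega : q.length ≤ m),
      List.drop_eq_nil_of_le hlt.le, List.drop_eq_nil_of_le (by omega), List.append_nil]

lemma subpath_concat {p : List V} {a b c : V} (hb : b ∈ p)
    (h1 : p.idxOf a ≤ p.idxOf b) (h2 : p.idxOf b ≤ p.idxOf c) :
    pathConcat (subpath p a b) (subpath p b c) = subpath p a c := by
  have hbl : p.idxOf b < p.length := List.idxOf_lt_length_iff.2 hb
  rw [pathConcat, subpath, subpath, subpath, List.tail_drop]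
  have htt : p.take (p.idxOf b + 1) = (p.take (p.idxOf c + 1)).take (p.idxOf b + 1) := by
    rw [List.take_take, min_eq_left (by omega)]
  rw [htt]
  exact (take_drop_split (by omega)).symm

/-! ### pathWeight lemmas -/

lemma pathWeight_nil : pathWeight ℓ ([] : List V) = 0 := by
  simp [pathWeight, pathEdges]

lemma pathWeight_single (a : V) : pathWeight ℓ [a] = 0 := by
  simp [pathWeight, pathEdges]

lemma pathWeight_cons_cons (a b : V) (l : List V) :
    pathWeight ℓ (a :: b :: l) = ℓ a b + pathWeight ℓ (b :: l) := by
  simp [pathWeight, pathEdges]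

lemma pathWeight_split (l1 : List V) (v : V) (l2 : List V) :
    pathWeight ℓ (l1 ++ v :: l2) = pathWeight ℓ (l1 ++ [v]) + pathWeight ℓ (v :: l2) := by
  induction l1 with
  | nil => simp [pathWeight_single]
  | cons a l1 ih =>
    cases l1 with
    | nil => simp [pathWeight_cons_cons, pathWeight_single]
    | cons b l1' =>
      simp only [List.cons_append, pathWeight_cons_cons] at ih ⊢
      rw [ih]; ring

lemma pathWeight_concat {p q : List V} {v : V} (h1 : p.getLast? = some v)
    (h2 : q.head? = some v) :
    pathWeight ℓ (pathConcat p q) = pathWeight ℓ p + pathWeight ℓ q := by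
  have hp : p.dropLast ++ [v] = p := List.dropLast_append_getLast? v h1
  have hq : q = v :: q.tail := List.eq_cons_of_mem_head? h2
  have hpc : pathConcat p q = p.dropLast ++ v :: q.tail := by
    rw [pathConcat, ← hp]; simp
  rw [hpc, pathWeight_split, hp, ← hq]

lemma pathWeight_nonneg (hpos : ∀ a b : V, E a b → 0 < ℓ a b) {l : List V}
    (hc : l.Chain' E) : 0 ≤ pathWeight ℓ l := by
  induction l with
  | nil => simp [pathWeight_nil]
  | cons a l ih =>
    cases l with
    | nil => simp [pathWeight_single]
    | cons b m =>
      rw [pathWeight_cons_cons]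
      have hab : E a b := (List.isChain_cons_cons.1 hc).1
      have := ih (List.isChain_cons_cons.1 hc).2
      have := hpos a b hab
      linarith

lemma pathWeight_pos (hpos : ∀ a b : V, E a b → 0 < ℓ a b) {l : List V}
    (hc : l.Chain' E) (hlen : 2 ≤ l.length) : 0 < pathWeight ℓ l := by
  match l, hlen with
  | a :: b :: m, _ =>
    rw [pathWeight_cons_cons]
    have hab : E a b := (List.isChain_cons_cons.1 hc).1
    have h2 := pathWeight_nonneg hpos (List.isChain_cons_cons.1 hc).2
    have := hpos a b hab
    linarith

/-! ### pathConcat structure lemmas -/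

lemma chain'_pathConcat {p q : List V} {v : V} (hc1 : p.Chain' E) (hc2 : q.Chain' E)
    (h1 : p.getLast? = some v) (h2 : q.head? = some v) : (pathConcat p q).Chain' E := by
  have hq : q = v :: q.tail := List.eq_cons_of_mem_head? h2
  rw [pathConcat]
  apply hc1.append (hc2.tail)
  intro x hx y hy
  rw [h1, Option.mem_def, Option.some_inj] at hx
  subst hx
  rw [hq] at hc2
  exact (List.isChain_cons.1 hc2).1 y hy

lemma head?_pathConcat {p : List V} (q : List V) (hp : p ≠ []) :
    (pathConcat p q).head? = p.head? := by
  cases p with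
  | nil => exact absurd rfl hp
  | cons a l => simp [pathConcat]

lemma pathConcat_ne_nil {p : List V} (q : List V) (hp : p ≠ []) : pathConcat p q ≠ [] := by
  rw [pathConcat]
  simp [hp]

lemma getLast?_pathConcat {p q : List V} (h : p.getLast? = q.head?) :
    (pathConcat p q).getLast? = q.getLast? := by
  cases q with
  | nil =>
    simp only [List.head?_nil] at h
    rw [pathConcat]
    simp [List.getLast?_eq_none_iff.1 h]
  | cons v qt =>
    cases qt with
    | nil => simp [pathConcat, h]
    | cons b qt' =>
      rw [pathConcat, List.tail_cons, List.getLast?_append]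
      have : (b :: qt').getLast? = some ((b :: qt').getLast (by simp)) :=
        List.getLast?_eq_getLast _
      rw [List.getLast?_cons_cons, this]
      simp

end AuxLemmas2
section AuxLemmas3
set_option linter.unusedSectionVars false

variable {E : V → V → Prop} {ℓ : V → V → ℝ}

lemma subpath_isPathFrom {p : List V} (hnd : p.Nodup) (hch : p.Chain' E) {u t : V}
    (hu : u ∈ p) (ht : t ∈ p) (hle : p.idxOf u ≤ p.idxOf t) :
    IsPathFrom E (subpath p u t) u t :=
  ⟨⟨subpath_ne_nil hu ht hle, subpath_nodup hnd u t, subpath_chain' hch u t⟩,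
    subpath_head? hu ht hle, subpath_getLast? hu ht hle⟩

/-- Every nonempty walk contains a path between the same endpoints of at most
the same weight. -/
lemma walk_to_path (hpos : ∀ a b : V, E a b → 0 < ℓ a b) :
    ∀ n (l : List V), l.length ≤ n → l ≠ [] → l.Chain' E →
    ∃ p : List V, p ≠ [] ∧ p.Nodup ∧ p.Chain' E ∧ p.head? = l.head? ∧
      p.getLast? = l.getLast? ∧ pathWeight ℓ p ≤ pathWeight ℓ l ∧ ∀ x ∈ p, x ∈ l := by
  intro n
  induction n with
  | zero =>
    intro l hl hne _
    exact absurd (List.length_pos_iff.2 hne) (by omega)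
  | succ n IH =>
    intro l hlen hne hc
    by_cases hnd : l.Nodup
    · exact ⟨l, hne, hnd, hc, rfl, rfl, le_refl _, fun x hx => hx⟩
    obtain ⟨a, l', rfl⟩ : ∃ a l', l = a :: l' := by
      cases l with
      | nil => exact absurd rfl hne
      | cons a l' => exact ⟨a, l', rfl⟩
    by_cases ha : a ∈ l'
    · -- first vertex repeats: cut the initial cycle and recurse
      set j := l'.idxOf a with hj
      have hjl : j < l'.length := List.idxOf_lt_length_iff.2 ha
      have hw : l'.drop j = a :: l'.drop (j + 1) := by
        rw [List.drop_eq_getElem_cons hjl, List.getElem_idxOf hjl]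
      have hl'ne : l' ≠ [] := by rintro rfl; simp at ha
      have hchain : (l'.drop j).Chain' E := (List.IsChain.tail hc).drop j
      have hlen' : (l'.drop j).length ≤ n := by
        rw [List.length_drop]
        simp only [List.length_cons] at hlen
        omega
      obtain ⟨p, hpne, hpnd, hpch, hph, hpl, hpw, hps⟩ :=
        IH (l'.drop j) hlen' (by rw [hw]; simp) hchain
      refine ⟨p, hpne, hpnd, hpch, ?_, ?_, ?_, ?_⟩
      · rw [hph, hw]; simp
      · rw [hpl, getLast?_drop_of_lt hjl]
        cases l' with
        | nil => exact absurd rfl hl'ne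
        | cons b m => simp [List.getLast?_cons_cons]
      · -- weight comparison
        have hsplit : (a :: l') = (a :: l'.take j) ++ a :: l'.drop (j + 1) := by
          have h0 : l' = l'.take j ++ l'.drop j := (List.take_append_drop j l').symm
          conv_lhs => rw [h0, hw]
          simp
        have hw2 : pathWeight ℓ (a :: l') =
            pathWeight ℓ ((a :: l'.take j) ++ [a]) + pathWeight ℓ (a :: l'.drop (j + 1)) := by
          rw [hsplit, pathWeight_split]
        have hpre : ((a :: l'.take j) ++ [a]).Chain' E := by
          apply hc.prefix
          refine ⟨l'.drop (j+1), ?_⟩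
          rw [hsplit]; simp
        have h0 : 0 ≤ pathWeight ℓ ((a :: l'.take j) ++ [a]) := pathWeight_nonneg hpos hpre
        rw [← hw] at hw2
        calc pathWeight ℓ p ≤ pathWeight ℓ (l'.drop j) := hpw
          _ ≤ pathWeight ℓ (a :: l') := by rw [hw2]; linarith
      · intro x hx
        exact List.mem_cons_of_mem a (List.mem_of_mem_drop (hps x hx))
    · -- head does not repeat: recurse on the tail
      have hl'ne : l' ≠ [] := by
        rintro rfl
        exact hnd (by simp)
      obtain ⟨p, hpne, hpnd, hpch, hph, hpl, hpw, hps⟩ :=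
        IH l' (by simp only [List.length_cons] at hlen; omega) hl'ne hc.tail
      obtain ⟨y, l't, rfl⟩ : ∃ y l't, l' = y :: l't := by
        cases l' with
        | nil => exact absurd rfl hl'ne
        | cons y t => exact ⟨y, t, rfl⟩
      obtain ⟨y', pt, rfl⟩ : ∃ y' pt, p = y' :: pt := by
        cases p with
        | nil => exact absurd rfl hpne
        | cons y' t => exact ⟨y', t, rfl⟩
      have hyy : y' = y := by simpa using hph
      subst hyy
      have hE : E a y' := (List.isChain_cons_cons.1 hc).1
      have hanp : a ∉ y' :: pt := fun hmem => ha (hps a hmem)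
      refine ⟨a :: y' :: pt, by simp, ?_, ?_, by simp, ?_, ?_, ?_⟩
      · exact List.nodup_cons.2 ⟨hanp, hpnd⟩
      · exact List.isChain_cons_cons.2 ⟨hE, hpch⟩
      · rw [List.getLast?_cons_cons, hpl, List.getLast?_cons_cons]
      · rw [pathWeight_cons_cons, pathWeight_cons_cons]
        linarith
      · intro x hx
        rcases List.mem_cons.1 hx with rfl | hx'
        · exact List.mem_cons_self
        · exact List.mem_cons_of_mem a (hps x hx')

/-- The distance is at most the weight of any path. -/
lemma dist_le_weight {Q : List V} {u t : V} (hQ : IsPathFrom E Q u t) :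
    dist E ℓ u t ≤ (pathWeight ℓ Q : EReal) :=
  sInf_le ⟨Q, hQ, rfl⟩

/-- A shortest path weighs at most any path between the same endpoints. -/
lemma shortest_le_weight {P Q : List V} {x y : V} (hP : IsShortestPath E ℓ P x y)
    (hQ : IsPathFrom E Q x y) : pathWeight ℓ P ≤ pathWeight ℓ Q := by
  have h := dist_le_weight (ℓ := ℓ) hQ
  rw [← hP.2] at h
  exact_mod_cast h

/-- A subpath of a shortest path weighs at most any path between its endpoints. -/
lemma subpath_min (hpos : ∀ a b : V, E a b → 0 < ℓ a b) {P Q : List V} {x y u t : V}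
    (hP : IsShortestPath E ℓ P x y) (hu : u ∈ P) (ht : t ∈ P)
    (hle : P.idxOf u ≤ P.idxOf t) (hQ : IsPathFrom E Q u t) :
    pathWeight ℓ (subpath P u t) ≤ pathWeight ℓ Q := by
  obtain ⟨⟨hne, hnd, hch⟩, hhead, hlast⟩ := hP.1
  have hx : x ∈ P := mem_of_head?' hhead
  have hy : y ∈ P := mem_of_getLast?' hlast
  have hix : P.idxOf x = 0 := indexOf_head hhead
  have hiy : P.idxOf y = P.length - 1 := indexOf_getLast hnd hlast
  have hul : P.idxOf u < P.length := List.idxOf_lt_length_iff.2 hu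
  have htl : P.idxOf t < P.length := List.idxOf_lt_length_iff.2 ht
  have hxu : P.idxOf x ≤ P.idxOf u := by omega
  have hty : P.idxOf t ≤ P.idxOf y := by omega
  set A := subpath P x u with hA
  set B := subpath P u t with hB
  set C := subpath P t y with hC
  have hApf : IsPathFrom E A x u := subpath_isPathFrom hnd hch hx hu hxu
  have hBpf : IsPathFrom E B u t := subpath_isPathFrom hnd hch hu ht hle
  have hCpf : IsPathFrom E C t y := subpath_isPathFrom hnd hch ht hy hty
  -- the walk A · Q · C
  set W1 := pathConcat A Q with hW1
  have hlAhQ : A.getLast? = Q.head? := by rw [hApf.2.2, hQ.2.1]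
  have hW1c : W1.Chain' E := chain'_pathConcat hApf.1.2.2 hQ.1.2.2 hApf.2.2 hQ.2.1
  have hW1h : W1.head? = some x := by
    rw [hW1, head?_pathConcat _ hApf.1.1, hApf.2.1]
  have hW1l : W1.getLast? = some t := by
    rw [hW1, getLast?_pathConcat hlAhQ, hQ.2.2]
  have hW1w : pathWeight ℓ W1 = pathWeight ℓ A + pathWeight ℓ Q :=
    pathWeight_concat hApf.2.2 hQ.2.1
  set W := pathConcat W1 C with hW
  have hlW1hC : W1.getLast? = C.head? := by rw [hW1l, hCpf.2.1]
  have hWc : W.Chain' E := chain'_pathConcat hW1c hCpf.1.2.2 hW1l hCpf.2.1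
  have hW1ne : W1 ≠ [] := pathConcat_ne_nil _ hApf.1.1
  have hWh : W.head? = some x := by rw [hW, head?_pathConcat _ hW1ne, hW1h]
  have hWl : W.getLast? = some y := by rw [hW, getLast?_pathConcat hlW1hC, hCpf.2.2]
  have hWw : pathWeight ℓ W = pathWeight ℓ A + pathWeight ℓ Q + pathWeight ℓ C := by
    rw [hW, pathWeight_concat hW1l hCpf.2.1, hW1w]
  have hWne : W ≠ [] := pathConcat_ne_nil _ hW1ne
  -- reduce the walk to a path
  obtain ⟨R, hRne, hRnd, hRch, hRh, hRl, hRw, -⟩ :=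
    walk_to_path hpos W.length W (le_refl _) hWne hWc
  have hRpf : IsPathFrom E R x y := ⟨⟨hRne, hRnd, hRch⟩, by rw [hRh, hWh], by rw [hRl, hWl]⟩
  have hPR : pathWeight ℓ P ≤ pathWeight ℓ R := shortest_le_weight hP hRpf
  -- decompose the weight of P
  have hd1 : pathConcat A B = subpath P x t := subpath_concat hu hxu hle
  have hd2 : pathConcat (subpath P x t) C = subpath P x y := subpath_concat ht (by omega) hty
  have hPw : pathWeight ℓ P = pathWeight ℓ A + pathWeight ℓ B + pathWeight ℓ C := by
    have e1 : pathWeight ℓ (subpath P x t) = pathWeight ℓ A + pathWeight ℓ B := by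
      rw [← hd1, pathWeight_concat hApf.2.2 hBpf.2.1]
    have e2 : pathWeight ℓ (subpath P x y) =
        pathWeight ℓ (subpath P x t) + pathWeight ℓ C := by
      rw [← hd2, pathWeight_concat _ hCpf.2.1]
      rw [subpath_getLast? hx ht (by omega)]
    rw [subpath_whole hnd hhead hlast] at e2
    rw [e2, e1]
  have : pathWeight ℓ R ≤ pathWeight ℓ W := hRw
  rw [hWw] at this
  rw [hPw] at hPR
  linarith

/-- Two shortest paths emanating (weakly) from a common vertex `v` cannot visit two
further vertices in opposite orders. -/
lemma no_cross (hpos : ∀ a b : V, E a b → 0 < ℓ a b) {P1 P2 : List V} {x1 y1 x2 y2 : V}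
    (hP1 : IsShortestPath E ℓ P1 x1 y1) (hP2 : IsShortestPath E ℓ P2 x2 y2)
    {v w1 w2 : V}
    (hv1 : v ∈ P1) (hv2 : v ∈ P2) (hw11 : w1 ∈ P1) (hw12 : w1 ∈ P2)
    (hw21 : w2 ∈ P1) (hw22 : w2 ∈ P2)
    (h1v : P1.idxOf v ≤ P1.idxOf w1) (h2v : P2.idxOf v ≤ P2.idxOf w2)
    (h1 : P1.idxOf w1 < P1.idxOf w2) (h2 : P2.idxOf w2 < P2.idxOf w1) : False := by
  obtain ⟨⟨hne1, hnd1, hch1⟩, hh1, hl1⟩ := hP1.1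
  obtain ⟨⟨hne2, hnd2, hch2⟩, hh2, hl2⟩ := hP2.1
  have q1 : IsPathFrom E (subpath P1 v w1) v w1 := subpath_isPathFrom hnd1 hch1 hv1 hw11 h1v
  have q1' : IsPathFrom E (subpath P2 v w1) v w1 :=
    subpath_isPathFrom hnd2 hch2 hv2 hw12 (by omega)
  have q2 : IsPathFrom E (subpath P1 v w2) v w2 :=
    subpath_isPathFrom hnd1 hch1 hv1 hw21 (by omega)
  have q2' : IsPathFrom E (subpath P2 v w2) v w2 := subpath_isPathFrom hnd2 hch2 hv2 hw22 h2v
  -- equal weights of the two `v→w1` subpaths and the two `v→w2` subpaths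
  have e1 : pathWeight ℓ (subpath P1 v w1) = pathWeight ℓ (subpath P2 v w1) :=
    le_antisymm (subpath_min hpos hP1 hv1 hw11 h1v q1')
      (subpath_min hpos hP2 hv2 hw12 (by omega) q1)
  have e2 : pathWeight ℓ (subpath P1 v w2) = pathWeight ℓ (subpath P2 v w2) :=
    le_antisymm (subpath_min hpos hP1 hv1 hw21 (by omega) q2')
      (subpath_min hpos hP2 hv2 hw22 h2v q2)
  -- additivity along P1 : v → w1 → w2
  have a1 : pathWeight ℓ (subpath P1 v w2) =
      pathWeight ℓ (subpath P1 v w1) + pathWeight ℓ (subpath P1 w1 w2) := by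
    rw [← subpath_concat hw11 h1v h1.le,
      pathWeight_concat q1.2.2 (subpath_head? hw11 hw21 h1.le)]
  have a2 : pathWeight ℓ (subpath P2 v w1) =
      pathWeight ℓ (subpath P2 v w2) + pathWeight ℓ (subpath P2 w2 w1) := by
    rw [← subpath_concat hw22 h2v h2.le,
      pathWeight_concat q2'.2.2 (subpath_head? hw22 hw12 h2.le)]
  -- strict positivity of the middle segments
  have hp1 : 0 < pathWeight ℓ (subpath P1 w1 w2) := by
    apply pathWeight_pos hpos (subpath_chain' hch1 _ _)
    rw [subpath_length hw21]
    have := List.idxOf_lt_length_iff.2 hw21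
    omega
  have hp2 : 0 < pathWeight ℓ (subpath P2 w2 w1) := by
    apply pathWeight_pos hpos (subpath_chain' hch2 _ _)
    rw [subpath_length hw12]
    have := List.idxOf_lt_length_iff.2 hw12
    omega
  linarith

end AuxLemmas3
section AuxLemmas4
set_option linter.unusedSectionVars false

variable {E : V → V → Prop} {ℓ : V → V → ℝ}

/-- Given the same first component, the second component of a concordant pair is
uniquely determined (auxiliary, asymmetric version). -/
lemma w_unique_aux (hpos : ∀ a b : V, E a b → 0 < ℓ a b) {P1 P2 : List V} {x1 y1 x2 y2 : V}
    (hP1 : IsShortestPath E ℓ P1 x1 y1) (hP2 : IsShortestPath E ℓ P2 x2 y2) {v w1 w2 : V}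
    (hc1 : ConcordantPair P1 x1 y1 P2 x2 y2 v w1)
    (hc2 : ConcordantPair P1 x1 y1 P2 x2 y2 v w2)
    (hlt : P1.idxOf w1 < P1.idxOf w2) : False := by
  obtain ⟨ha1, hb1, hpr11, hpr12, hidpre1, hidsuf1⟩ := hc1
  obtain ⟨ha2, hb2, hpr21, hpr22, hidpre2, hidsuf2⟩ := hc2
  obtain ⟨⟨hne1, hnd1, hch1⟩, hh1, hl1⟩ := hP1.1
  obtain ⟨⟨hne2, hnd2, hch2⟩, hh2, hl2⟩ := hP2.1
  have hw11 : w1 ∈ P1 := hpr11.2.1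
  have hw12 : w1 ∈ P2 := hpr12.2.1
  have hw21 : w2 ∈ P1 := hpr21.2.1
  have hw22 : w2 ∈ P2 := hpr22.2.1
  have hy1 : y1 ∈ P1 := mem_of_getLast?' hl1
  have hy2 : y2 ∈ P2 := mem_of_getLast?' hl2
  have hiy1 : P1.idxOf y1 = P1.length - 1 := indexOf_getLast hnd1 hl1
  have hiy2 : P2.idxOf y2 = P2.length - 1 := indexOf_getLast hnd2 hl2
  have hw21l : P1.idxOf w2 < P1.length := List.idxOf_lt_length_iff.2 hw21
  have hw22l : P2.idxOf w2 < P2.length := List.idxOf_lt_length_iff.2 hw22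
  rcases le_or_gt (P2.idxOf w1) (P2.idxOf w2) with h2 | h2
  · -- same order on both paths: `w2` is a shared vertex of the two suffixes at `w1`
    have hm1 : w2 ∈ subpath P1 w1 y1 := mem_subpath_of_le hw21 hlt.le (by omega)
    have hm2 : w2 ∈ subpath P2 w1 y2 := mem_subpath_of_le hw22 h2 (by omega)
    have := hidsuf1 w2 hm1 hm2
    rw [Set.mem_inter_iff] at this
    obtain ⟨hA, hB⟩ := this
    rcases hA with rfl | hA
    · omega
    rcases hB with hB | hB
    · exact absurd hB.symm (by rintro rfl; omega)
    · rcases hA with rfl | rfl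
      all_goals rcases hB with rfl | rfl
      all_goals first
        | omega
        | (apply hb2; exact ⟨by simp, by simp⟩)
  · -- opposite orders: impossible for shortest paths
    exact no_cross hpos hP1 hP2 hpr11.1 hpr12.1 hw11 hw12 hw21 hw22
      hpr11.2.2 hpr22.2.2 hlt h2

/-- Given the same first component, the second component of a concordant pair is unique. -/
lemma w_unique (hpos : ∀ a b : V, E a b → 0 < ℓ a b) {P1 P2 : List V} {x1 y1 x2 y2 : V}
    (hP1 : IsShortestPath E ℓ P1 x1 y1) (hP2 : IsShortestPath E ℓ P2 x2 y2) {v w1 w2 : V}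
    (hc1 : ConcordantPair P1 x1 y1 P2 x2 y2 v w1)
    (hc2 : ConcordantPair P1 x1 y1 P2 x2 y2 v w2) : w1 = w2 := by
  have hnd1 : P1.Nodup := hP1.1.1.2.1
  rcases lt_trichotomy (P1.idxOf w1) (P1.idxOf w2) with h | h | h
  · exact absurd (w_unique_aux hpos hP1 hP2 hc1 hc2 h) (by simp)
  · exact eq_of_indexOf_eq hnd1 hc1.2.2.1.2.1 hc2.2.2.1.2.1 h
  · exact absurd (w_unique_aux hpos hP1 hP2 hc2 hc1 h) (by simp)

/-- If two shortest paths share an internal vertex, then they admit a concordant pair. -/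
lemma exists_concordant {P1 P2 : List V} {x1 y1 x2 y2 : V}
    (hP1 : IsShortestPath E ℓ P1 x1 y1) (hP2 : IsShortestPath E ℓ P2 x2 y2) {u : V}
    (hu1 : Internal P1 u) (hu2 : Internal P2 u) :
    ∃ a b, ConcordantPair P1 x1 y1 P2 x2 y2 a b := by
  classical
  obtain ⟨⟨hne1, hnd1, hch1⟩, hh1, hl1⟩ := hP1.1
  obtain ⟨⟨hne2, hnd2, hch2⟩, hh2, hl2⟩ := hP2.1
  have hx1 : x1 ∈ P1 := mem_of_head?' hh1
  have hx2 : x2 ∈ P2 := mem_of_head?' hh2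
  have hy1 : y1 ∈ P1 := mem_of_getLast?' hl1
  have hy2 : y2 ∈ P2 := mem_of_getLast?' hl2
  have hix1 : P1.idxOf x1 = 0 := indexOf_head hh1
  have hix2 : P2.idxOf x2 = 0 := indexOf_head hh2
  have hiy1 : P1.idxOf y1 = P1.length - 1 := indexOf_getLast hnd1 hl1
  have hiy2 : P2.idxOf y2 = P2.length - 1 := indexOf_getLast hnd2 hl2
  set I : Set V := ({x1, y1} ∩ {x2, y2} : Set V) with hI
  set S' : Set V := {s | s ∈ P1 ∧ s ∈ P2 ∧ s ∉ I} with hS'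
  have huS : u ∈ S' := by
    refine ⟨hu1.1, hu2.1, fun hmem => ?_⟩
    rw [hI, Set.mem_inter_iff] at hmem
    rcases hmem.1 with rfl | h
    · exact hu1.2.1 hh1
    · rw [Set.mem_singleton_iff] at h
      subst h
      exact hu1.2.2 hl1
  obtain ⟨a, haS, hamin⟩ :=
    Set.exists_min_image S' (fun s => P1.idxOf s) (Set.toFinite _) ⟨u, huS⟩
  set U : Set V := {s | s ∈ S' ∧ P1.idxOf a ≤ P1.idxOf s ∧ P2.idxOf a ≤ P2.idxOf s}
    with hU
  obtain ⟨b, hbU, hbmax⟩ :=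
    Set.exists_max_image U (fun s => P1.idxOf s) (Set.toFinite _)
      ⟨a, haS, le_refl _, le_refl _⟩
  obtain ⟨ha1, ha2, haI⟩ := haS
  obtain ⟨⟨hb1, hb2, hbI⟩, hab1, hab2⟩ := hbU
  -- key uniqueness facts
  have hmin' : ∀ s, s ∈ P1 → s ∈ P2 → s ∉ I → P1.idxOf s ≤ P1.idxOf a → s = a := by
    intro s hs1 hs2 hsI hle
    exact eq_of_indexOf_eq hnd1 hs1 ha1 (le_antisymm hle (hamin s ⟨hs1, hs2, hsI⟩))
  have hmax' : ∀ s, s ∈ P1 → s ∈ P2 → s ∉ I →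
      P1.idxOf b ≤ P1.idxOf s → P2.idxOf b ≤ P2.idxOf s → s = b := by
    intro s hs1 hs2 hsI hle1 hle2
    refine eq_of_indexOf_eq hnd1 hs1 hb1
      (le_antisymm (hbmax s ⟨⟨hs1, hs2, hsI⟩, le_trans hab1 hle1, le_trans hab2 hle2⟩) hle1)
  refine ⟨a, b, haI, hbI, ⟨ha1, hb1, hab1⟩, ⟨ha2, hb2, hab2⟩, ?_, ?_⟩
  · -- prefixes are internally disjoint
    intro s hs1 hs2
    rw [subpath_eq_take hh1] at hs1
    rw [subpath_eq_take hh2] at hs2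
    have hsP1 : s ∈ P1 := List.mem_of_mem_take hs1
    have hsP2 : s ∈ P2 := List.mem_of_mem_take hs2
    have hle1 : P1.idxOf s ≤ P1.idxOf a := by
      have := indexOf_lt_of_mem_take hs1; omega
    have hle2 : P2.idxOf s ≤ P2.idxOf a := by
      have := indexOf_lt_of_mem_take hs2; omega
    have hsa : s ∉ I → s = a := fun hsI => hmin' s hsP1 hsP2 hsI hle1
    by_cases hsI : s ∈ I
    · rw [hI, Set.mem_inter_iff] at hsI
      have hsal : P1.idxOf a < P1.length := List.idxOf_lt_length_iff.2 ha1
      have hsal2 : P2.idxOf a < P2.length := List.idxOf_lt_length_iff.2 ha2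
      rcases hsI.1 with rfl | hsy1
      · rcases hsI.2 with rfl | hsy2
        · exact ⟨Or.inl rfl, Or.inl rfl⟩
        · rw [Set.mem_singleton_iff] at hsy2
          subst hsy2
          have : s = a := eq_of_indexOf_eq hnd2 hsP2 ha2 (by omega)
          exact ⟨Or.inr (by simp [this]), Or.inr (by simp [this])⟩
      · rw [Set.mem_singleton_iff] at hsy1
        subst hsy1
        have : s = a := eq_of_indexOf_eq hnd1 hsP1 ha1 (by omega)
        exact ⟨Or.inr (by simp [this]), Or.inr (by simp [this])⟩
    · have := hsa hsI
      subst this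
      exact ⟨Or.inr rfl, Or.inr rfl⟩
  · -- suffixes are internally disjoint
    intro s hs1 hs2
    rw [subpath_eq_drop hnd1 hl1] at hs1
    rw [subpath_eq_drop hnd2 hl2] at hs2
    have hsP1 : s ∈ P1 := List.mem_of_mem_drop hs1
    have hsP2 : s ∈ P2 := List.mem_of_mem_drop hs2
    have hle1 : P1.idxOf b ≤ P1.idxOf s := le_indexOf_of_mem_drop hnd1 hs1
    have hle2 : P2.idxOf b ≤ P2.idxOf s := le_indexOf_of_mem_drop hnd2 hs2
    by_cases hsI : s ∈ I
    · rw [hI, Set.mem_inter_iff] at hsI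
      rcases hsI.1 with rfl | hsy1
      · -- s = x1
        have : s = b := eq_of_indexOf_eq hnd1 hsP1 hb1 (by omega)
        exact ⟨Or.inl (by simp [this]), Or.inl (by simp [this])⟩
      · rw [Set.mem_singleton_iff] at hsy1
        rcases hsI.2 with rfl | hsy2
        · -- s = x2
          have : s = b := eq_of_indexOf_eq hnd2 hsP2 hb2 (by omega)
          exact ⟨Or.inl (by simp [this]), Or.inl (by simp [this])⟩
        · rw [Set.mem_singleton_iff] at hsy2
          exact ⟨Or.inr (by simp [hsy1]), Or.inr (by simp [hsy2])⟩
    · have : s = b := hmax' s hsP1 hsP2 hsI hle1 hle2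
      exact ⟨Or.inl (by simp [this]), Or.inl (by simp [this])⟩

end AuxLemmas4

set_option linter.unusedSectionVars false in
set_option maxHeartbeats 1000000 in
/-- If every pair `(P1, P2) ∈ Π(x1, y1) × Π(x2, y2)` shares
an internal vertex, then for every integer `k ≥ 1`,
`F_{disj,k}(x1, y1, x2, y2) = Σ_{v,w ∈ V} D_{v,w,k}(x1, y1, x2, y2)`. -/
theorem Fdisjk_eq_sum_Dvwk
    (F : Type*) [Field F] [CharP F 2]
    (hpos : ∀ a b : V, E a b → 0 < ℓ a b)
    (x1 y1 x2 y2 : V)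
    (hint : ∀ P1 P2 : List V, IsShortestPath E ℓ P1 x1 y1 →
      IsShortestPath E ℓ P2 x2 y2 → ∃ u, Internal P1 u ∧ Internal P2 u)
    (k : ℤ) (hk : 1 ≤ k) :
    enumPoly2 F (disjkPairs E ℓ k x1 y1 x2 y2) =
      ∑ v : V, ∑ w : V, enumPoly2 F (DvwkPairs E ℓ k v w x1 y1 x2 y2) := by
  classical
  set t : V × V → Set (List V × List V) :=
    (fun c => DvwkPairs E ℓ k c.1 c.2 x1 y1 x2 y2) with ht
  have hsub : ∀ c, t c ⊆ disjkPairs E ℓ k x1 y1 x2 y2 :=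
    fun c q hq => ⟨hq.1, hq.2.1, hq.2.2.1⟩
  have hcover : disjkPairs E ℓ k x1 y1 x2 y2 = ⋃ c, t c := by
    apply Set.Subset.antisymm
    · intro q hq
      obtain ⟨h1, h2, hg⟩ := hq
      obtain ⟨u, hu1, hu2⟩ := hint q.1 q.2 h1 h2
      obtain ⟨a, b, hab⟩ := exists_concordant h1 h2 hu1 hu2
      have hne : (concordantSet q.1 x1 y1 q.2 x2 y2).Nonempty := ⟨(a, b), hab⟩
      obtain ⟨c0, hc0, hmin⟩ :=
        Set.exists_min_image _ (fun c => q.1.idxOf c.1) (Set.toFinite _) hne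
      exact Set.mem_iUnion.2 ⟨c0, h1, h2, hg, hc0, hmin⟩
    · intro q hq
      obtain ⟨c, hc⟩ := Set.mem_iUnion.1 hq
      exact hsub c hc
  have hdisj : Pairwise (Function.onFun Disjoint t) := by
    intro c c' hne
    rw [Function.onFun, Set.disjoint_left]
    intro q hq hq'
    apply hne
    obtain ⟨h1, h2, -, hcc, hmin⟩ := hq
    obtain ⟨-, -, -, hcc', hmin'⟩ := hq'
    have hnd1 : q.1.Nodup := h1.1.1.2.1
    have hv1 : c.1 ∈ q.1 := hcc.2.2.1.1
    have hv1' : c'.1 ∈ q.1 := hcc'.2.2.1.1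
    have hveq : c.1 = c'.1 :=
      eq_of_indexOf_eq hnd1 hv1 hv1' (le_antisymm (hmin _ hcc') (hmin' _ hcc))
    have hcc2 : ConcordantPair q.1 x1 y1 q.2 x2 y2 c'.1 c.2 := by
      rw [← hveq]; exact hcc
    have hweq : c.2 = c'.2 := w_unique hpos h1 h2 hcc2 hcc'
    exact Prod.ext hveq hweq
  have hfinall : ∀ c, (t c).Finite := by
    intro c
    apply Set.Finite.subset
      (Set.Finite.prod (List.finite_length_le V (Fintype.card V))
        (List.finite_length_le V (Fintype.card V)))
    intro q hq
    exact Set.mem_prod.2 ⟨hq.1.1.1.2.1.length_le_card, hq.2.1.1.1.2.1.length_le_card⟩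
  rw [enumPoly2, hcover, finsum_mem_iUnion hdisj hfinall, finsum_eq_sum_of_fintype,
    Fintype.sum_prod_type]
  rfl

end DSP
end

section
/- Let (P1, P2) ∈ Π(s1, t1) × Π(s2, t2) be a pair of shortest paths in the weighted DAG G, and let x, y be vertices such that x precedes y on both P1 and P2. Then every edge of the subpath P1[x, y] and every edge of the subpath P2[x, y] belongs to E_∩ = E(s1, t1) ∩ E(s2, t2). -/
open scoped BigOperators

namespace DSP

variable {V : Type*} [Fintype V] [DecidableEq V]

variable (E : V → V → Prop) (ℓ : V → V → ℝ)

/-! ### Auxiliary lemmas for Statement 16 -/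

section Aux

variable {G : V → V → Prop} {w : V → V → ℝ}

/-- The segment of a list from index `i` to index `j` (inclusive). -/
def seg (p : List V) (i j : ℕ) : List V := (p.drop i).take (j + 1 - i)

lemma subpath_eq_seg (p : List V) (x y : V) :
    subpath p x y = seg p (p.idxOf x) (p.idxOf y) := by
  simp [subpath, seg, List.drop_take]

lemma seg_length {p : List V} {i j : ℕ} (hij : i ≤ j) (hj : j < p.length) :
    (seg p i j).length = j + 1 - i := by
  simp [seg]; omega

lemma seg_ne_nil {p : List V} {i j : ℕ} (hij : i ≤ j) (hj : j < p.length) :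
    seg p i j ≠ [] := by
  have := seg_length hij hj
  intro h; rw [h] at this; simp at this; omega

lemma seg_getElem {p : List V} {i j k : ℕ} (hj : j < p.length) (hk : k < j + 1 - i) :
    (seg p i j)[k]'(by rw [seg_length (by omega) hj]; omega) = p[i+k]'(by omega) := by
  simp [seg]

lemma seg_head? {p : List V} {i j : ℕ} (hij : i ≤ j) (hj : j < p.length) :
    (seg p i j).head? = some (p[i]'(Nat.lt_of_le_of_lt hij hj)) := by
  rw [List.head?_eq_getElem?, List.getElem?_eq_getElem (by rw [seg_length hij hj]; omega)]
  congr 1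
  have := seg_getElem (i := i) (k := 0) hj (by omega)
  simpa using this

lemma getElem_idx_congr {l : List V} {i j : ℕ} (h : i = j) (hi : i < l.length) :
    l[i] = l[j]'(h ▸ hi) := by subst h; rfl

lemma seg_getLast? {p : List V} {i j : ℕ} (hij : i ≤ j) (hj : j < p.length) :
    (seg p i j).getLast? = some (p[j]'hj) := by
  rw [List.getLast?_eq_getElem?, seg_length hij hj,
    show j + 1 - i - 1 = j - i by omega,
    List.getElem?_eq_getElem (by rw [seg_length hij hj]; omega)]
  congr 1
  rw [seg_getElem hj (by omega : j - i < j + 1 - i)]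
  exact getElem_idx_congr (by omega) (by omega)

lemma seg_infix (p : List V) (i j : ℕ) : seg p i j <:+: p :=
  List.infix_iff_prefix_suffix.2 ⟨p.drop i, List.take_prefix _ _, List.drop_suffix _ _⟩

lemma seg_isPathFrom {p : List V} {i j : ℕ} (hc : p.Chain' G) (hnd : p.Nodup)
    (hij : i ≤ j) (hj : j < p.length) :
    IsPathFrom G (seg p i j) (p[i]'(Nat.lt_of_le_of_lt hij hj)) (p[j]'hj) :=
  ⟨⟨seg_ne_nil hij hj, (seg_infix p i j).sublist.nodup hnd, hc.infix (seg_infix p i j)⟩,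
    seg_head? hij hj, seg_getLast? hij hj⟩

lemma seg_tail (p : List V) (i j : ℕ) :
    (seg p i j).tail = (p.drop (i+1)).take (j - i) := by
  have e1 : seg p i j = (p.take (j+1)).drop i := by rw [seg, List.drop_take]
  rw [e1, List.tail_drop, List.drop_take]
  congr 1
  omega

lemma seg_zero (p : List V) (i : ℕ) : seg p 0 i = p.take (i+1) := by
  simp [seg]

lemma seg_all {p : List V} (h : p ≠ []) : seg p 0 (p.length - 1) = p := by
  rw [seg_zero]
  apply List.take_of_length_le
  have : 0 < p.length := List.length_pos_iff.2 h
  omega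

lemma seg_concat {p : List V} {i j k : ℕ} (hij : i ≤ j) (hjk : j ≤ k) :
    pathConcat (seg p i j) (seg p j k) = seg p i k := by
  rw [pathConcat, seg_tail]
  show seg p i j ++ (p.drop (j+1)).take (k - j) = seg p i k
  rw [seg, seg, show p.drop (j+1) = (p.drop i).drop (j+1-i) by
      rw [List.drop_drop]; congr 1; omega,
    ← List.take_add]
  congr 1
  omega

/-! #### Heads, lasts, edges of concatenations -/

lemma head?_getElem {l : List V} {a : V} (h : l.head? = some a) :
    ∃ hl : 0 < l.length, l[0] = a := by
  rw [List.head?_eq_getElem?] at h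
  exact List.getElem?_eq_some_iff.1 h

lemma getLast?_getElem {l : List V} {a : V} (h : l.getLast? = some a) :
    ∃ hl : l.length - 1 < l.length, l[l.length - 1] = a := by
  rw [List.getLast?_eq_getElem?] at h
  exact List.getElem?_eq_some_iff.1 h

lemma pathEdges_cons_cons (a b : V) (l : List V) :
    pathEdges (a :: b :: l) = (a, b) :: pathEdges (b :: l) := rfl

lemma pathEdges_concat : ∀ {u : List V} {v : List V}, u ≠ [] → u.getLast? = v.head? →
    pathEdges (pathConcat u v) = pathEdges u ++ pathEdges v := by
  intro u
  induction u with
  | nil => intro v h; simp at h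
  | cons a u' ih =>
    intro v _ h
    cases u' with
    | nil =>
      obtain ⟨ys, rfl⟩ := List.head?_eq_some_iff.1 (by simpa using h.symm)
      show pathEdges ([a] ++ ys) = pathEdges [a] ++ pathEdges (a :: ys)
      simp [pathEdges]
    | cons c u'' =>
      have h' : (c :: u'').getLast? = v.head? := by
        rwa [List.getLast?_cons_cons] at h
      have hrec := ih (v := v) (by simp) h'
      have hstep : pathEdges (pathConcat (a :: c :: u'') v) =
          (a, c) :: pathEdges (pathConcat (c :: u'') v) := rfl
      rw [hstep, hrec, pathEdges_cons_cons, List.cons_append]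

lemma pathWeight_concat_s16 {u v : List V} (hu : u ≠ []) (h : u.getLast? = v.head?) :
    pathWeight w (pathConcat u v) = pathWeight w u + pathWeight w v := by
  rw [pathWeight, pathWeight, pathWeight, pathEdges_concat hu h, List.map_append,
    List.sum_append]

lemma getLast?_pathConcat_s16 {u v : List V} (h : u.getLast? = v.head?) (hv : v ≠ []) :
    (pathConcat u v).getLast? = v.getLast? := by
  rw [pathConcat, List.getLast?_append]
  match v with
  | [m] => simp at h ⊢; simp [h]
  | m :: c :: t' =>
    show ((c :: t').getLast?).or u.getLast? = _
    rw [List.getLast?_cons_cons]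
    rcases hz : (c :: t').getLast? with _ | z
    · exact absurd (List.getLast?_eq_none_iff.1 hz) (by simp)
    · simp

lemma chain'_pathConcat_s16 {u v : List V} (hu : u.Chain' G) (hv : v.Chain' G)
    (h : u.getLast? = v.head?) : (pathConcat u v).Chain' G := by
  match v with
  | [] => simpa [pathConcat] using hu
  | m :: t =>
    rw [pathConcat]
    refine List.isChain_append.2 ⟨hu, (List.isChain_cons.1 hv).2, ?_⟩
    intro a ha b hb
    have hm : u.getLast? = some m := by simpa using h
    rw [hm] at ha
    simp only [Option.mem_def, Option.some_inj] at ha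
    subst ha
    exact (List.isChain_cons.1 hv).1 b hb

lemma pathConcat_isPathFrom {u v : List V} {a m b : V} (hu : IsPathFrom G u a m)
    (hv : IsPathFrom G v m b) (hnd : (u ++ v.tail).Nodup) :
    IsPathFrom G (pathConcat u v) a b := by
  obtain ⟨⟨hun, _, huc⟩, huh, hul⟩ := hu
  obtain ⟨⟨hvn, _, hvc⟩, hvh, hvl⟩ := hv
  refine ⟨⟨?_, hnd, chain'_pathConcat_s16 huc hvc (hul.trans hvh.symm)⟩, ?_, ?_⟩
  · rw [pathConcat]; simp [hun]
  · rw [pathConcat, List.head?_append_of_ne_nil _ hun]; exact huh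
  · rw [getLast?_pathConcat_s16 (hul.trans hvh.symm) hvn]; exact hvl

/-! #### Membership via indices -/

lemma mem_take_getElem {p : List V} {u : V} {n : ℕ} (h : u ∈ p.take n) :
    ∃ k, ∃ hk : k < p.length, k < n ∧ p[k] = u := by
  obtain ⟨k, hk, he⟩ := List.mem_iff_getElem.1 h
  rw [List.length_take] at hk
  rw [List.getElem_take] at he
  exact ⟨k, by omega, by omega, he⟩

lemma mem_drop_getElem {p : List V} {u : V} {n : ℕ} (h : u ∈ p.drop n) :
    ∃ k, ∃ hk : n + k < p.length, p[n + k] = u := by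
  obtain ⟨k, hk, he⟩ := List.mem_iff_getElem.1 h
  rw [List.length_drop] at hk
  rw [List.getElem_drop] at he
  exact ⟨k, by omega, he⟩

lemma mem_tail_getElem {p : List V} {u : V} (h : u ∈ p.tail) :
    ∃ k, ∃ hk : k + 1 < p.length, p[k + 1] = u := by
  obtain ⟨k, hk, he⟩ := List.mem_iff_getElem.1 h
  rw [List.length_tail] at hk
  rw [List.getElem_tail] at he
  exact ⟨k, by omega, he⟩

/-! #### Closed walks contain cycles -/

lemma exists_cycle_of_walk {G : V → V → Prop} :
    ∀ (n : ℕ) (p : List V), p.length ≤ n → p.Chain' G → 2 ≤ p.length →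
      p.head? = p.getLast? → ∃ c, IsCycle G c := by
  intro n
  induction n with
  | zero => intro p h _ h2 _; omega
  | succ n ih =>
    intro p hlen hc h2 hcl
    by_cases hnd : p.tail.Nodup
    · exact ⟨p, h2, hc, hcl, hnd⟩
    · obtain ⟨xd, hdup⟩ := List.exists_duplicate_iff_not_nodup.2 hnd
      obtain ⟨a, b, hab, hxa, hxb⟩ := List.duplicate_iff_exists_distinct_get.1 hdup
      have htl : p.tail.length = p.length - 1 := List.length_tail
      have hb : (b : ℕ) < p.tail.length := b.isLt
      have ha : (a : ℕ) < p.tail.length := a.isLt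
      have hbl : (b : ℕ) + 1 < p.length := by omega
      have hal : (a : ℕ) + 1 < p.length := by omega
      have hij : (a : ℕ) + 1 ≤ (b : ℕ) + 1 := by
        have : (a : ℕ) < (b : ℕ) := hab; omega
      have hpa : p[(a : ℕ) + 1] = xd := by
        have h1 : p.tail[(a : ℕ)]'(by omega) = p[(a : ℕ) + 1] := List.getElem_tail _
        rw [← h1, hxa, List.get_eq_getElem]
      have hpb : p[(b : ℕ) + 1] = xd := by
        have h1 : p.tail[(b : ℕ)]'(by omega) = p[(b : ℕ) + 1] := List.getElem_tail _
        rw [← h1, hxb, List.get_eq_getElem]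
      refine ih (seg p ((a : ℕ) + 1) ((b : ℕ) + 1)) ?_ (hc.infix (seg_infix _ _ _)) ?_ ?_
      · rw [seg_length hij hbl]
        omega
      · rw [seg_length hij hbl]
        have : (a : ℕ) < (b : ℕ) := hab
        omega
      · rw [seg_head? hij hbl, seg_getLast? hij hbl, hpa, hpb]

lemma no_two_paths (hdag : Acyclic G) {a b : V} {r1 r2 : List V}
    (h1 : IsPathFrom G r1 a b) (h2 : IsPathFrom G r2 b a) (hab : a ≠ b) : False := by
  obtain ⟨⟨hn1, hnd1, hc1⟩, hh1, hl1⟩ := h1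
  obtain ⟨⟨hn2, hnd2, hc2⟩, hh2, hl2⟩ := h2
  obtain ⟨t2, rfl⟩ := List.head?_eq_some_iff.1 hh2
  have ht2 : t2 ≠ [] := by
    rintro rfl
    simp [List.getLast?] at hl2
    exact hab hl2.symm
  have hlt2 : t2.getLast? = some a := by
    have := List.getLast?_tail (l := b :: t2)
    rw [if_neg (by simpa using ht2)] at this
    rw [List.tail_cons] at this
    rw [this, hl2]
  have hchain : (r1 ++ t2).Chain' G := by
    refine List.isChain_append.2 ⟨hc1, (List.isChain_cons.1 hc2).2, ?_⟩
    intro u hu v hv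
    rw [hl1] at hu
    simp only [Option.mem_def, Option.some_inj] at hu
    subst hu
    exact (List.isChain_cons.1 hc2).1 v hv
  obtain ⟨c, hcyc⟩ := exists_cycle_of_walk (r1 ++ t2).length (r1 ++ t2) le_rfl hchain
    (by
      have := List.length_pos_iff.2 hn1
      have := List.length_pos_iff.2 ht2
      simp only [List.length_append]
      omega)
    (by
      rw [List.head?_append_of_ne_nil _ hn1, hh1, List.getLast?_append, hlt2]
      rfl)
  exact hdag c hcyc

end Aux

section Splice

variable {G : V → V → Prop} {w : V → V → ℝ}

lemma subpath_isPathFrom_s16 {p : List V} {x y : V} (hp : IsPath G p) (hpre : Precedes p x y) :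
    IsPathFrom G (subpath p x y) x y := by
  obtain ⟨hn, hnd, hc⟩ := hp
  obtain ⟨hx, hy, hij⟩ := hpre
  have hj : p.idxOf y < p.length := List.idxOf_lt_length_iff.2 hy
  have := seg_isPathFrom (G := G) hc hnd hij hj
  rw [subpath_eq_seg]
  rwa [List.getElem_idxOf, List.getElem_idxOf] at this

lemma splice (hdag : Acyclic G) {p q : List V} {s t x y : V}
    (hp : IsShortestPath G w p s t) (hpre : Precedes p x y) (hq : IsPathFrom G q x y)
    (hw : pathWeight w q ≤ pathWeight w (subpath p x y)) :
    ∃ Q : List V, IsShortestPath G w Q s t ∧ pathEdges q ⊆ pathEdges Q ∧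
      pathWeight w q = pathWeight w (subpath p x y) := by
  have hp1 := hp.1
  have hpd := hp.2
  obtain ⟨⟨hpn, hpnd, hpc⟩, hph, hpl⟩ := hp1
  have hq1 := hq
  obtain ⟨⟨hqn, hqnd, hqc⟩, hqh, hql⟩ := hq
  obtain ⟨hxp, hyp, hij⟩ := hpre
  set i := p.idxOf x with hidef
  set j := p.idxOf y with hjdef
  have hjlen : j < p.length := List.idxOf_lt_length_iff.2 hyp
  have hilen : i < p.length := List.idxOf_lt_length_iff.2 hxp
  have hpi : p[i] = x := List.getElem_idxOf hilen
  have hpj : p[j] = y := List.getElem_idxOf hjlen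
  obtain ⟨hplen0, hs⟩ := head?_getElem hph
  obtain ⟨hpl1, ht⟩ := getLast?_getElem hpl
  obtain ⟨hqlen0, hqx⟩ := head?_getElem hqh
  obtain ⟨hql1, hqy⟩ := getLast?_getElem hql
  set A := seg p 0 i with hAdef
  set B := seg p i j with hBdef
  set C := seg p j (p.length - 1) with hCdef
  have hsubB : subpath p x y = B := subpath_eq_seg p x y
  have hA : IsPathFrom G A s x := by
    have := seg_isPathFrom (G := G) hpc hpnd (Nat.zero_le i) hilen
    rwa [hs, hpi] at this
  have hB : IsPathFrom G B x y := by
    have := seg_isPathFrom (G := G) hpc hpnd hij hjlen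
    rwa [hpi, hpj] at this
  have hC : IsPathFrom G C y t := by
    have := seg_isPathFrom (G := G) hpc hpnd (by omega : j ≤ p.length - 1) (by omega)
    rwa [hpj, ht] at this
  -- decomposition of p and its weight
  have hdecomp : p = pathConcat (pathConcat A B) C := by
    rw [hAdef, hBdef, hCdef, seg_concat (Nat.zero_le i) hij,
      seg_concat (Nat.zero_le j) (by omega), seg_all hpn]
  have hwP : pathWeight w p = pathWeight w A + pathWeight w B + pathWeight w C := by
    conv_lhs => rw [hdecomp]
    rw [pathWeight_concat_s16 (by rw [pathConcat]; simp [hA.1.1])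
        ((getLast?_pathConcat_s16 (hA.2.2.trans hB.2.1.symm) hB.1.1).trans
          (hB.2.2.trans hC.2.1.symm)),
      pathWeight_concat_s16 hA.1.1 (hA.2.2.trans hB.2.1.symm)]
  -- the spliced path
  set Q := pathConcat (pathConcat A q) C with hQdef
  -- nodup facts
  have hAeq : A = p.take (i + 1) := seg_zero p i
  have hCt : C.tail = p.drop (j + 1) := by
    rw [hCdef, seg_tail]
    apply List.take_of_length_le
    rw [List.length_drop]
    omega
  have hndA : A.Nodup := (seg_infix p 0 i).sublist.nodup hpnd
  have hndqt : q.tail.Nodup := (List.tail_sublist q).nodup hqnd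
  have hndCt : C.tail.Nodup := by
    rw [hCt]; exact (List.drop_sublist _ _).nodup hpnd
  have hdisjAq : A.Disjoint q.tail := by
    intro u huA huq
    rw [hAeq] at huA
    obtain ⟨k, hk, hkn, hku⟩ := mem_take_getElem huA
    obtain ⟨m, hm, hmu⟩ := mem_tail_getElem huq
    by_cases hki : k = i
    · have hux : u = x := by
        rw [← hku, ← hpi]
        exact getElem_idx_congr hki hk
      have : q[m + 1] = q[0] := by rw [hmu, hux, ← hqx]
      have := (hqnd.getElem_inj_iff).1 this
      omega
    · have hkilt : k < i := by omega
      have hne : u ≠ x := by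
        intro h
        rw [h, ← hpi] at hku
        exact hki ((hpnd.getElem_inj_iff).1 hku)
      have r1 : IsPathFrom G (seg p k i) u x := by
        have := seg_isPathFrom (G := G) hpc hpnd (le_of_lt hkilt) hilen
        rwa [hku, hpi] at this
      have r2 : IsPathFrom G (seg q 0 (m + 1)) x u := by
        have := seg_isPathFrom (G := G) hqc hqnd (Nat.zero_le (m + 1)) hm
        rwa [hqx, hmu] at this
      exact no_two_paths hdag r1 r2 hne
  have hdisjAC : A.Disjoint C.tail := by
    intro u huA huC
    rw [hAeq] at huA
    rw [hCt] at huC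
    obtain ⟨k, hk, hkn, hku⟩ := mem_take_getElem huA
    obtain ⟨m, hm, hmu⟩ := mem_drop_getElem huC
    have : p[k] = p[j + 1 + m] := by rw [hku, hmu]
    have := (hpnd.getElem_inj_iff).1 this
    omega
  have hdisjqC : q.tail.Disjoint C.tail := by
    intro u huq huC
    rw [hCt] at huC
    obtain ⟨m, hm, hmu⟩ := mem_tail_getElem huq
    obtain ⟨m', hm', hmu'⟩ := mem_drop_getElem huC
    have hne : u ≠ y := by
      intro h
      rw [h, ← hpj] at hmu'
      have := (hpnd.getElem_inj_iff).1 hmu'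
      omega
    have hmq : m + 1 ≤ q.length - 1 := by
      by_contra hcon
      have heqi : m + 1 = q.length - 1 := by omega
      refine hne ?_
      rw [← hmu, ← hqy]
      exact getElem_idx_congr heqi hm
    have r1 : IsPathFrom G (seg p j (j + 1 + m')) y u := by
      have := seg_isPathFrom (G := G) hpc hpnd (by omega : j ≤ j + 1 + m') hm'
      rwa [hpj, hmu'] at this
    have r2 : IsPathFrom G (seg q (m + 1) (q.length - 1)) u y := by
      have := seg_isPathFrom (G := G) hqc hqnd hmq (by omega)
      rwa [hmu, hqy] at this
    exact no_two_paths hdag r1 r2 hne.symm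
  have hndAq : (A ++ q.tail).Nodup :=
    List.nodup_append.2 ⟨hndA, hndqt, fun a ha b hb hab => hdisjAq ha (by subst hab; exact hb)⟩
  have hndQ : ((A ++ q.tail) ++ C.tail).Nodup :=
    List.nodup_append.2 ⟨hndAq, hndCt,
      fun a ha b hb hab => List.disjoint_append_left.2 ⟨hdisjAC, hdisjqC⟩ ha (by subst hab; exact hb)⟩
  -- Q is a path from s to t
  have hAq : IsPathFrom G (pathConcat A q) s y := pathConcat_isPathFrom hA hq1 hndAq
  have hQ : IsPathFrom G Q s t := pathConcat_isPathFrom hAq hC hndQ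
  -- weight of Q
  have hwQ : pathWeight w Q = pathWeight w A + pathWeight w q + pathWeight w C := by
    rw [hQdef, pathWeight_concat_s16 hAq.1.1 (hAq.2.2.trans hC.2.1.symm),
      pathWeight_concat_s16 hA.1.1 (hA.2.2.trans hq1.2.1.symm)]
  rw [hsubB] at hw ⊢
  have hle : pathWeight w Q ≤ pathWeight w p := by rw [hwQ, hwP]; linarith
  have hdistle : dist G w s t ≤ (pathWeight w Q : EReal) := sInf_le ⟨Q, hQ, rfl⟩
  have hcle : (pathWeight w Q : EReal) ≤ (pathWeight w p : EReal) := EReal.coe_le_coe_iff.2 hle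
  have heq : (pathWeight w Q : EReal) = dist G w s t :=
    le_antisymm (hpd ▸ hcle) hdistle
  have hPQ : pathWeight w Q = pathWeight w p :=
    EReal.coe_eq_coe_iff.1 (heq.trans hpd.symm)
  refine ⟨Q, ⟨hQ, heq⟩, ?_, by rw [hwQ, hwP] at hPQ; linarith⟩
  have e1 : pathEdges (pathConcat A q) = pathEdges A ++ pathEdges q :=
    pathEdges_concat hA.1.1 (hA.2.2.trans hq1.2.1.symm)
  have e2 : pathEdges Q = pathEdges (pathConcat A q) ++ pathEdges C :=
    pathEdges_concat hAq.1.1 (hAq.2.2.trans hC.2.1.symm)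
  intro e he
  rw [e2, e1]
  simp [he]

end Splice

/-- In a weighted DAG, for `(P1, P2) ∈ Π(s1, t1) × Π(s2, t2)`
and vertices `x, y` with `x` preceding `y` on both paths, every edge of
`P1[x, y]` and of `P2[x, y]` lies in `E_∩ = E(s1, t1) ∩ E(s2, t2)`. -/
theorem subpath_edges_mem_inter
    (hdag : Acyclic E) (s1 t1 s2 t2 x y : V) (P1 P2 : List V)
    (h1 : IsShortestPath E ℓ P1 s1 t1) (h2 : IsShortestPath E ℓ P2 s2 t2)
    (hx1 : Precedes P1 x y) (hx2 : Precedes P2 x y) :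
    ∀ e : V × V,
      (e ∈ pathEdges (subpath P1 x y) ∨ e ∈ pathEdges (subpath P2 x y)) →
      e ∈ shortestEdges E ℓ s1 t1 ∩ shortestEdges E ℓ s2 t2 := by
  have hB1 : IsPathFrom E (subpath P1 x y) x y := subpath_isPathFrom_s16 h1.1.1 hx1
  have hB2 : IsPathFrom E (subpath P2 x y) x y := subpath_isPathFrom_s16 h2.1.1 hx2
  have heq : pathWeight ℓ (subpath P1 x y) = pathWeight ℓ (subpath P2 x y) := by
    rcases le_total (pathWeight ℓ (subpath P1 x y)) (pathWeight ℓ (subpath P2 x y)) with h | h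
    · obtain ⟨_, _, _, hh⟩ := splice hdag h2 hx2 hB1 h
      exact hh
    · obtain ⟨_, _, _, hh⟩ := splice hdag h1 hx1 hB2 h
      exact hh.symm
  intro e he
  constructor
  · rcases he with he | he
    · obtain ⟨Q, hQ, hsub, -⟩ := splice hdag h1 hx1 hB1 le_rfl
      exact ⟨Q, hQ, hsub he⟩
    · obtain ⟨Q, hQ, hsub, -⟩ := splice hdag h1 hx1 hB2 heq.ge
      exact ⟨Q, hQ, hsub he⟩
  · rcases he with he | he
    · obtain ⟨Q, hQ, hsub, -⟩ := splice hdag h2 hx2 hB1 heq.le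
      exact ⟨Q, hQ, hsub he⟩
    · obtain ⟨Q, hQ, hsub, -⟩ := splice hdag h2 hx2 hB2 le_rfl
      exact ⟨Q, hQ, hsub he⟩


end DSP
end
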